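/- Let (X_s)_{0<s≤1}, (Y_s)_{0<s≤1}, h of size τ, f, x₀, α, Ω_{j,s} (h-j-linear of norm ≤ 1) be as in the setting where f_s(x₀+w) = f_s(x₀) + Σ_{j≥1} α^j Ω_{j,s}(w) for ‖w‖ < 1/α, and let g_n ∈ X̊₁ satisfy ‖g_{n,s}‖ ≤ C₀·Cⁿ·n!/(1−s)ⁿ with C ≥ 1. Let b ≥ 0 be an integer, A > 0, and v_k = (v_{k,s}) ∈ X̊₁ (k ≥ 1) with ‖v_{k,s}‖ ≤ A·Cᵏ·k!/(1−s)ᵏ. Then there exist w_j = (w_{j,s}) ∈ Ẏ₁ with ‖w_{j,s}‖ ≤ (A/C₀)·β₁(C₀α)·Cʲ·j!/(1−s)ʲ, where β₁(t) = Σ_{k≥0} (k+1)·4ᵏ·t^{k+1}/k!, such that for every s with τC/(1−s) < 1 and Σ_{n≥1} τⁿCⁿ/(1−s)ⁿ < 1/(C₀α): the vectors v_s := h^b·Σ_{k≥1} hᵏ v_{k,s} and g_s := Σ_{k≥1} hᵏ g_{k,s} are given by absolutely convergent series in X_s, and Σ_{j≥1} j·α^j·Ω̃_{j,s}(g_s,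 …, g_s, v_s) = Σ_{j≥1} hʲ w_{j,s} in Y_s (the left-hand side is the Fréchet derivative f'(x₀+g_s) applied to v_s). -/

import Mathlib

open Finset

/-- `β₁(t) = Σ_{k≥0} (k+1)·4ᵏ·t^{k+1}/k!` -/
noncomputable def beta1 (t : ℝ) : ℝ :=
  ∑' k : ℕ, (k + 1) * 4 ^ k * t ^ (k + 1) / k.factorial




/-- pairing lemma -/
lemma fact_pair (a c : ℕ) (ha : 2 ≤ a) (hc : 2 ≤ c) :
    a.factorial * c.factorial ≤ 2 * (a + c - 2).factorial := by
  induction a, ha using Nat.le_induction with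
  | base =>
    have : 2 + c - 2 = c := by omega
    rw [this, Nat.factorial_two]
  | succ a ha ih =>
    have h1 : (a + 1).factorial = (a + 1) * a.factorial := rfl
    have h2 : a + 1 + c - 2 = (a + c - 2) + 1 := by omega
    rw [h2, Nat.factorial_succ]
    calc (a+1).factorial * c.factorial = (a+1) * (a.factorial * c.factorial) := by
          rw [h1]; ring
    _ ≤ (a+1) * (2 * (a + c - 2).factorial) := Nat.mul_le_mul_left _ ih
    _ ≤ (a + c - 2 + 1) * (2 * (a + c - 2).factorial) := by
          apply Nat.mul_le_mul_right; omega
    _ = 2 * ((a + c - 2 + 1) * (a + c - 2).factorial) := by ring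

/-- endpoint-split lemma -/
lemma sum_fact_mul_fact (n : ℕ) :
    ∑ l ∈ Icc 1 (n - 1), l.factorial * (n - l).factorial ≤ 4 * (n - 1).factorial := by
  rcases Nat.lt_or_ge n 2 with h | h
  · interval_cases n <;> simp
  rcases Nat.lt_or_ge n 3 with h3 | h3
  · interval_cases n; simp
  -- n ≥ 3
  have hsplit : Icc 1 (n - 1) = insert 1 (insert (n-1) (Icc 2 (n-2))) := by
    ext l; simp [mem_Icc, mem_insert]; omega
  rw [hsplit]
  rw [Finset.sum_insert (by simp [mem_Icc]; omega),
      Finset.sum_insert (by simp [mem_Icc]; omega)]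
  have e1 : Nat.factorial 1 * (n - 1).factorial = (n-1).factorial := by simp
  have e2 : (n-1).factorial * (n - (n-1)).factorial = (n-1).factorial := by
    have : n - (n-1) = 1 := by omega
    simp [this]
  have e3 : ∑ l ∈ Icc 2 (n-2), l.factorial * (n - l).factorial ≤ (n - 3) * (2 * (n-2).factorial) := by
    have := Finset.sum_le_card_nsmul (Icc 2 (n-2)) (fun l => l.factorial * (n - l).factorial)
      (2 * (n-2).factorial) ?_
    · simpa [Nat.card_Icc, smul_eq_mul, show n - 2 + 1 - 2 = n - 3 by omega] using this
    · intro l hl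
      simp only [mem_Icc] at hl
      have h5 := fact_pair l (n - l) hl.1 (by omega)
      have he : l + (n - l) - 2 = n - 2 := by omega
      rw [he] at h5
      simpa using h5
  rw [e1, e2]
  have e4 : (n - 3) * (2 * (n-2).factorial) ≤ 2 * (n-1).factorial := by
    have : (n-1).factorial = (n-1) * (n-2).factorial := by
      have : n - 1 = (n - 2) + 1 := by omega
      rw [this, Nat.factorial_succ]
    rw [this]
    calc (n-3) * (2 * (n-2).factorial) = 2 * ((n-3) * (n-2).factorial) := by ring
    _ ≤ 2 * ((n-1) * (n-2).factorial) := by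
        apply Nat.mul_le_mul_left; apply Nat.mul_le_mul_right; omega
  omega


/-- compositions of n into j positive parts, as a Finset of functions -/
def Kcomp (j n : ℕ) : Finset (Fin j → ℕ) :=
  (Fintype.piFinset fun _ => Finset.Icc 1 n).filter (fun k => ∑ i, k i = n)

lemma mem_Kcomp {j n : ℕ} {k : Fin j → ℕ} :
    k ∈ Kcomp j n ↔ (∀ i, 1 ≤ k i) ∧ ∑ i, k i = n := by
  simp only [Kcomp, mem_filter, Fintype.mem_piFinset, mem_Icc]
  constructor
  · rintro ⟨h1, h2⟩; exact ⟨fun i => (h1 i).1, h2⟩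
  · rintro ⟨h1, h2⟩
    refine ⟨fun i => ⟨h1 i, ?_⟩, h2⟩
    rw [← h2]
    exact Finset.single_le_sum (fun i _ => Nat.zero_le _) (mem_univ i)

lemma Kcomp_eq_empty {j n : ℕ} (h : n < j) : Kcomp j n = ∅ := by
  apply Finset.eq_empty_of_forall_notMem
  intro k hk
  rw [mem_Kcomp] at hk
  have : (j : ℕ) ≤ ∑ i, k i := by
    calc (j : ℕ) = ∑ _i : Fin j, 1 := by simp
    _ ≤ ∑ i, k i := Finset.sum_le_sum (fun i _ => hk.1 i)
  omega

/-- peeling the first coordinate -/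
lemma Kcomp_sum_peel {M : Type*} [AddCommMonoid M] (j n : ℕ) (f : (Fin (j+1) → ℕ) → M) :
    ∑ k ∈ Kcomp (j+1) n, f k
      = ∑ l ∈ Icc 1 n, ∑ k' ∈ Kcomp j (n - l), f (Fin.cons l k') := by
  rw [← Finset.sum_sigma (Icc 1 n) (fun l => Kcomp j (n - l))
    (fun x => f (Fin.cons x.1 x.2))]
  apply Finset.sum_nbij' (fun k => ⟨k 0, Fin.tail k⟩) (fun x => Fin.cons x.1 x.2)
  · intro k hk
    rw [mem_Kcomp] at hk
    obtain ⟨h1, h2⟩ := hk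
    rw [Fin.sum_univ_succ] at h2
    simp only [Finset.mem_sigma, mem_Icc, mem_Kcomp]
    have h3 : ∑ i, Fin.tail k i = ∑ i : Fin j, k i.succ := rfl
    refine ⟨⟨h1 0, by omega⟩, fun i => h1 i.succ, by rw [h3]; omega⟩
  · intro x hx
    simp only [Finset.mem_sigma, mem_Icc, mem_Kcomp] at hx
    obtain ⟨⟨hx1, hx2⟩, hx3, hx4⟩ := hx
    rw [mem_Kcomp]
    constructor
    · intro i
      refine Fin.cases ?_ ?_ i
      · simpa using hx1
      · intro i'; simpa using hx3 i'
    · rw [Fin.sum_univ_succ]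
      simp only [Fin.cons_zero, Fin.cons_succ]
      omega
  · intro k _; exact Fin.cons_self_tail k
  · intro x _; simp [Fin.tail_cons]
  · intro k _; rw [Fin.cons_self_tail]

/-- main combinatorial lemma -/
lemma Kcomp_sum_prod_fact (j : ℕ) : ∀ n : ℕ,
    j.factorial * ∑ k ∈ Kcomp (j+1) n, ∏ i, (k i).factorial
      ≤ 4 ^ j * n.factorial := by
  induction j with
  | zero =>
    intro n
    rcases Nat.eq_zero_or_pos n with rfl | hn
    · simp [Kcomp_eq_empty]
    have : Kcomp 1 n ⊆ {fun _ => n} := by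
      intro k hk
      rw [mem_Kcomp] at hk
      simp only [Finset.mem_singleton]
      funext i
      have h0 : i = 0 := Subsingleton.elim _ _
      rw [h0]
      have := hk.2
      rwa [Fin.sum_univ_one] at this
    calc Nat.factorial 0 * ∑ k ∈ Kcomp 1 n, ∏ i, (k i).factorial
        ≤ 1 * ∑ k ∈ {fun _ => n}, ∏ i : Fin 1, (k i).factorial := by
          apply Nat.mul_le_mul_left
          apply Finset.sum_le_sum_of_subset this
      _ = n.factorial := by simp
      _ ≤ 4 ^ 0 * n.factorial := by simp
  | succ j ih =>
    intro n
    rcases Nat.lt_or_ge n (j+2) with hn | hn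
    · rw [Kcomp_eq_empty hn]; simp
    rw [Kcomp_sum_peel]
    have hterm : ∀ l ∈ Icc 1 n,
        (∑ k' ∈ Kcomp (j+1) (n - l), ∏ i, ((Fin.cons l k' : Fin (j+2) → ℕ) i).factorial)
          = l.factorial * ∑ k' ∈ Kcomp (j+1) (n - l), ∏ i, (k' i).factorial := by
      intro l _
      rw [Finset.mul_sum]
      apply Finset.sum_congr rfl
      intro k' _
      rw [Fin.prod_univ_succ]
      simp [Fin.cons_zero, Fin.cons_succ]
    rw [Finset.sum_congr rfl hterm]
    -- restrict to l ≤ n - (j+1)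
    have hzero : ∀ l ∈ Icc 1 n, l ∉ Icc 1 (n - (j+1)) →
        l.factorial * ∑ k' ∈ Kcomp (j+1) (n - l), ∏ i, (k' i).factorial = 0 := by
      intro l hl hl'
      simp only [mem_Icc] at hl hl'
      rw [Kcomp_eq_empty (by omega)]
      simp
    rw [← Finset.sum_subset (Finset.Icc_subset_Icc_right (by omega)) hzero]
    calc (j+1).factorial * ∑ l ∈ Icc 1 (n - (j+1)),
            l.factorial * ∑ k' ∈ Kcomp (j+1) (n - l), ∏ i, (k' i).factorial
        = (j+1) * ∑ l ∈ Icc 1 (n - (j+1)),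
            l.factorial * (j.factorial * ∑ k' ∈ Kcomp (j+1) (n - l), ∏ i, (k' i).factorial) := by
          rw [Nat.factorial_succ, Finset.mul_sum, Finset.mul_sum]
          exact Finset.sum_congr rfl fun l _ => by ring
      _ ≤ (j+1) * ∑ l ∈ Icc 1 (n - (j+1)), l.factorial * (4^j * (n - l).factorial) := by
          apply Nat.mul_le_mul_left
          apply Finset.sum_le_sum
          intro l _
          exact Nat.mul_le_mul_left _ (ih (n - l))
      _ = 4^j * ((j+1) * ∑ l ∈ Icc 1 (n - (j+1)), l.factorial * (n - l).factorial) := by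
          rw [Finset.mul_sum, Finset.mul_sum, Finset.mul_sum]
          exact Finset.sum_congr rfl fun l _ => by ring
      _ ≤ 4^j * ((j+1) * ∑ l ∈ Icc 1 (n-1), l.factorial * (n - l).factorial) := by
          apply Nat.mul_le_mul_left
          apply Nat.mul_le_mul_left
          apply Finset.sum_le_sum_of_subset (Finset.Icc_subset_Icc_right (by omega))
      _ ≤ 4^j * ((j+1) * (4 * (n-1).factorial)) := by
          apply Nat.mul_le_mul_left
          apply Nat.mul_le_mul_left
          exact sum_fact_mul_fact n
      _ ≤ 4^(j+1) * n.factorial := by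
          have h1 : (j+1) * (n-1).factorial ≤ n.factorial := by
            calc (j+1) * (n-1).factorial ≤ n * (n-1).factorial :=
                  Nat.mul_le_mul_right _ (by omega)
            _ = n.factorial := by
                conv_rhs => rw [show n = (n-1)+1 by omega]
                rw [Nat.factorial_succ]
                congr 1
                omega
          calc 4^j * ((j+1) * (4 * (n-1).factorial))
              = 4^(j+1) * ((j+1) * (n-1).factorial) := by ring
            _ ≤ 4^(j+1) * n.factorial := Nat.mul_le_mul_left _ h1
set_option maxHeartbeats 1000000

lemma fin_zero_fun_eq (f g : Fin 0 → ℕ) : f = g := Subsingleton.elim f g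

lemma summable_pi_prod {d : ℕ} (f : Fin d → ℕ → ℝ)
    (hnn : ∀ i l, 0 ≤ f i l) (hs : ∀ i, Summable (f i)) :
    Summable (fun k : Fin d → ℕ => ∏ i, f i (k i)) := by
  induction d with
  | zero =>
    exact (hasSum_single (f := fun k : Fin 0 → ℕ => ∏ i, f i (k i)) default
      (fun b hb => absurd (Subsingleton.elim b default) hb)).summable
  | succ d ih =>
    have hrest : Summable (fun k : Fin d → ℕ => ∏ i, f i.succ (k i)) :=
      ih (fun i => f i.succ) (fun i l => hnn i.succ l) (fun i => hs i.succ)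
    have h2 := Summable.mul_of_nonneg (hs 0) hrest (fun l => hnn 0 l)
        (fun k => Finset.prod_nonneg fun i _ => hnn i.succ (k i))
    have h3 := ((Fin.consEquiv (fun _ => ℕ)).symm.summable_iff
      (f := fun x : ℕ × (Fin d → ℕ) => f 0 x.1 * ∏ i : Fin d, f i.succ (x.2 i))).2 h2
    have hfe : (fun k : Fin (d+1) → ℕ => ∏ i, f i (k i))
        = (fun x : ℕ × (Fin d → ℕ) => f 0 x.1 * ∏ i : Fin d, f i.succ (x.2 i))
            ∘ (Fin.consEquiv (fun _ => ℕ)).symm := by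
      funext k
      simp only [Function.comp_apply, Fin.consEquiv_symm_apply]
      rw [Fin.prod_univ_succ]
      rfl
    rw [hfe]
    exact h3

lemma multilinear_hasSum {E F : Type*} [NormedAddCommGroup E] [NormedSpace ℝ E]
    [NormedAddCommGroup F] [NormedSpace ℝ F] [CompleteSpace F] :
    ∀ (d : ℕ) (M : ContinuousMultilinearMap ℝ (fun _ : Fin d => E) F)
      (u : Fin d → ℕ → E) (U : Fin d → E),
      (∀ i, Summable (fun l => ‖u i l‖)) → (∀ i, HasSum (u i) (U i)) →
      HasSum (fun k : Fin d → ℕ => M (fun i => u i (k i))) (M U) := by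
  intro d
  induction d with
  | zero =>
    intro M u U _ _
    have h1 := hasSum_single (f := fun k : Fin 0 → ℕ => M (fun i => u i (k i))) default
      (fun b hb => absurd (Subsingleton.elim b default) hb)
    have he : (M fun i => u i ((default : Fin 0 → ℕ) i)) = M U := by
      congr 1
      funext i
      exact i.elim0
    exact he ▸ h1
  | succ d ih =>
    intro M u U hsn hs
    have hbound : ∀ k : Fin (d+1) → ℕ,
        ‖M (fun i => u i (k i))‖ ≤ ‖M‖ * ∏ i, ‖u i (k i)‖ := fun k => M.le_opNorm _
    have hprod := (summable_pi_prod (fun i l => ‖u i l‖) (fun i l => norm_nonneg _) hsn).mul_left ‖M‖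
    have hsumF : Summable (fun k : Fin (d+1) → ℕ => M (fun i => u i (k i))) :=
      Summable.of_norm (hprod.of_nonneg_of_le (fun k => norm_nonneg _) hbound)
    obtain ⟨T, hT⟩ := hsumF
    set e := (Fin.consEquiv (fun _ => ℕ)).symm with he
    have hT2 := (e.symm.hasSum_iff (f := fun k : Fin (d+1) → ℕ => M (fun i => u i (k i))) (a := T)).2 hT
    have hfe : ((fun k : Fin (d+1) → ℕ => M (fun i => u i (k i))) ∘ e.symm)
        = fun x : ℕ × (Fin d → ℕ) => (M.curryLeft (u 0 x.1)) (fun i => u i.succ (x.2 i)) := by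
      funext x
      simp only [Function.comp_apply, ContinuousMultilinearMap.curryLeft_apply]
      congr 1
      funext i
      refine Fin.cases ?_ ?_ i
      · rfl
      · intro i'; rfl
    rw [hfe] at hT2
    have hfiber : ∀ b : ℕ,
        HasSum (fun c : Fin d → ℕ => (M.curryLeft (u 0 b)) (fun i => u i.succ (c i)))
          ((M.curryLeft (u 0 b)) (fun i => U i.succ)) := by
      intro b
      exact ih (M.curryLeft (u 0 b)) (fun i => u i.succ) (fun i => U i.succ)
        (fun i => hsn i.succ) (fun i => hs i.succ)
    have hg := hT2.prod_fiberwise hfiber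
    set L := (ContinuousMultilinearMap.apply ℝ (fun _ : Fin d => E) F
      (fun i => U i.succ)).comp M.curryLeft with hL
    have hg2 := L.hasSum (hs 0)
    have hLe : (fun b : ℕ => L (u 0 b))
        = fun b : ℕ => (M.curryLeft (u 0 b)) (fun i => U i.succ) := by
      funext b; rfl
    rw [hLe] at hg2
    have hTU : T = M U := by
      have h3 := hg.unique hg2
      rw [h3, hL]
      simp only [ContinuousLinearMap.coe_comp', Function.comp_apply,
        ContinuousMultilinearMap.apply_apply, ContinuousMultilinearMap.curryLeft_apply]
      congr 1
      funext i
      refine Fin.cases ?_ ?_ i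
      · rfl
      · intro i'; rfl
    rwa [hTU] at hT
lemma omega_pow_out {E F : Type*} [NormedAddCommGroup E] [NormedSpace ℝ E]
    [NormedAddCommGroup F] [NormedSpace ℝ F] {d : ℕ}
    (M : ContinuousMultilinearMap ℝ (fun _ : Fin d => E) F)
    (hE : E →L[ℝ] E) (hF : F →L[ℝ] F)
    (hM : ∀ (v : Fin d → E) (i : Fin d), M (Function.update v i (hE (v i))) = hF (M v)) :
    ∀ (n : ℕ) (c : Fin d → ℕ), (∑ i, c i) = n → ∀ (x : Fin d → E),
      M (fun i => (hE ^ (c i)) (x i)) = (hF ^ n) (M x) := by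
  intro n
  induction n with
  | zero =>
    intro c hc x
    have hc0 : ∀ i, c i = 0 := by
      intro i
      have := Finset.sum_eq_zero_iff.1 hc
      exact this i (mem_univ i)
    have : (fun i => (hE ^ (c i)) (x i)) = x := by
      funext i; rw [hc0 i, pow_zero]; rfl
    rw [this, pow_zero]; rfl
  | succ n ih =>
    intro c hc x
    have hex : ∃ i0, 1 ≤ c i0 := by
      by_contra hcon
      push_neg at hcon
      have : ∑ i, c i = 0 := Finset.sum_eq_zero (fun i _ => by have := hcon i; omega)
      omega
    obtain ⟨i0, hi0⟩ := hex
    set c' := Function.update c i0 (c i0 - 1) with hc'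
    have hsum' : ∑ i, c' i = n := by
      rw [hc']
      rw [Finset.sum_update_of_mem (mem_univ i0)]
      rw [← Finset.sum_erase_add _ _ (mem_univ i0), Finset.erase_eq] at hc
      omega
    set vv := fun i => (hE ^ (c' i)) (x i) with hvv
    have hfe : (fun i => (hE ^ (c i)) (x i)) = Function.update vv i0 (hE (vv i0)) := by
      funext i
      by_cases hii : i = i0
      · subst hii
        rw [Function.update_self, hvv]
        simp only
        rw [hc', Function.update_self]
        rw [show c i = (c i - 1) + 1 by omega, pow_succ']
        rfl
      · rw [Function.update_of_ne hii, hvv]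
        simp only
        rw [hc', Function.update_of_ne hii]
    rw [hfe, hM vv i0, ih c' hsum' x, pow_succ']
    rfl

lemma summable_succ_mul_pow_div_factorial (x : ℝ) (hx : 0 ≤ x) :
    Summable (fun j : ℕ => ((j:ℝ)+1) * x^j / (j.factorial : ℝ)) := by
  refine Summable.of_nonneg_of_le (fun j => by positivity) (fun j => ?_)
    (Real.summable_pow_div_factorial (2*x))
  rw [mul_pow]
  have hfac : (0:ℝ) < (j.factorial : ℝ) := by positivity
  apply div_le_div_of_nonneg_right ?_ hfac.le
  have h2 : (j:ℝ) + 1 ≤ 2^j := by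
    have := Nat.lt_two_pow_self (n := j)
    have h3 : (j:ℕ) + 1 ≤ 2^j := this
    calc (j:ℝ) + 1 = ((j + 1 : ℕ) : ℝ) := by push_cast; ring
    _ ≤ ((2^j : ℕ) : ℝ) := by exact_mod_cast h3
    _ = (2:ℝ)^j := by push_cast; ring
  calc ((j:ℝ)+1) * x^j ≤ 2^j * x^j := by
        apply mul_le_mul_of_nonneg_right h2 (by positivity)
  _ = 2^j * x^j := rfl

lemma beta1_summand_summable (t : ℝ) (ht : 0 ≤ t) :
    Summable (fun k : ℕ => ((k:ℝ) + 1) * 4 ^ k * t ^ (k + 1) / (k.factorial : ℝ)) := by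
  have h1 := (summable_succ_mul_pow_div_factorial (4*t) (by positivity)).mul_right t
  refine h1.congr ?_
  intro k
  rw [mul_pow, pow_succ]
  field_simp

lemma beta1_nonneg (t : ℝ) (ht : 0 ≤ t) : 0 ≤ beta1 t := by
  apply tsum_nonneg
  intro k
  positivity

lemma sum_le_beta1 (t : ℝ) (ht : 0 ≤ t) (u : Finset ℕ) :
    ∑ k ∈ u, ((k:ℝ) + 1) * 4 ^ k * t ^ (k + 1) / (k.factorial : ℝ) ≤ beta1 t := by
  exact Summable.sum_le_tsum u (fun k _ => by positivity) (beta1_summand_summable t ht)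

lemma prod_ite_last {M : Type*} [CommMonoid M] (j : ℕ) (a c : M) :
    ∏ i : Fin (j+1), (if (i:ℕ) = j then a else c) = c^j * a := by
  rw [Fin.prod_univ_castSucc]
  have h1 : ∀ i : Fin j, (if ((i.castSucc : Fin (j+1)):ℕ) = j then a else c) = c := by
    intro i
    rw [if_neg]
    exact Nat.ne_of_lt i.isLt
  rw [Finset.prod_congr rfl (fun i _ => h1 i), Finset.prod_const, Finset.card_univ,
    Fintype.card_fin, if_pos (by simp)]

lemma sum_ite_last_nat (j bb : ℕ) : ∑ i : Fin (j+1), (if (i:ℕ) = j then bb else 0) = bb := by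
  rw [Fin.sum_univ_castSucc]
  have h1 : ∀ i : Fin j, (if ((i.castSucc : Fin (j+1)):ℕ) = j then bb else 0) = 0 := by
    intro i
    rw [if_neg]
    exact Nat.ne_of_lt i.isLt
  rw [Finset.sum_congr rfl (fun i _ => h1 i), Finset.sum_const_zero, if_pos (by simp), zero_add]

lemma Kcomp_sum_prod_fact_real (j nn : ℕ) :
    ∑ k ∈ Kcomp (j+1) nn, ∏ i, ((k i).factorial : ℝ)
      ≤ 4 ^ j * (nn.factorial : ℝ) / (j.factorial : ℝ) := by
  have h := Kcomp_sum_prod_fact j nn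
  have hc : ((j.factorial : ℝ)) * ∑ k ∈ Kcomp (j+1) nn, ∏ i, ((k i).factorial : ℝ)
      ≤ 4 ^ j * (nn.factorial : ℝ) := by exact_mod_cast h
  rw [le_div_iff₀ (show (0:ℝ) < (j.factorial : ℝ) by positivity), mul_comm]
  exact hc
theorem stmt11
    -- scales of Banach spaces (X_s), (Y_s), 0 < s ≤ 1
    {X Y : ℝ → Type*}
    [∀ s, NormedAddCommGroup (X s)] [∀ s, NormedSpace ℝ (X s)] [∀ s, CompleteSpace (X s)]
    [∀ s, NormedAddCommGroup (Y s)] [∀ s, NormedSpace ℝ (Y s)] [∀ s, CompleteSpace (Y s)]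
    (incX : ∀ s' s : ℝ, X s →L[ℝ] X s')
    (incY : ∀ s' s : ℝ, Y s →L[ℝ] Y s')
    (hincX_norm : ∀ s' s : ℝ, 0 < s' → s' ≤ s → s ≤ 1 → ∀ x : X s, ‖incX s' s x‖ ≤ ‖x‖)
    (hincY_norm : ∀ s' s : ℝ, 0 < s' → s' ≤ s → s ≤ 1 → ∀ y : Y s, ‖incY s' s y‖ ≤ ‖y‖)
    (hincX_id : ∀ s : ℝ, incX s s = ContinuousLinearMap.id ℝ (X s))
    (hincY_id : ∀ s : ℝ, incY s s = ContinuousLinearMap.id ℝ (Y s))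
    (hincX_comp : ∀ s'' s' s : ℝ, 0 < s'' → s'' ≤ s' → s' ≤ s → s ≤ 1 →
      (incX s'' s').comp (incX s' s) = incX s'' s)
    (hincY_comp : ∀ s'' s' s : ℝ, 0 < s'' → s'' ≤ s' → s' ≤ s → s ≤ 1 →
      (incY s'' s').comp (incY s' s) = incY s'' s)
    -- the operator h of size τ
    (τ : ℝ) (hτ : 0 < τ)
    (hX : ∀ s : ℝ, X s →L[ℝ] X s) (hY : ∀ s : ℝ, Y s →L[ℝ] Y s)
    (hhX_norm : ∀ s : ℝ, 0 < s → s ≤ 1 → ∀ n : ℕ, 1 ≤ n → ∀ x : X s,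
      ‖(hX s ^ n) x‖ ≤ τ ^ n / n.factorial * ‖x‖)
    (hhY_norm : ∀ s : ℝ, 0 < s → s ≤ 1 → ∀ n : ℕ, 1 ≤ n → ∀ y : Y s,
      ‖(hY s ^ n) y‖ ≤ τ ^ n / n.factorial * ‖y‖)
    (hhX_comm : ∀ s' s : ℝ, 0 < s' → s' ≤ s → s ≤ 1 →
      (incX s' s).comp (hX s) = (hX s').comp (incX s' s))
    (hhY_comm : ∀ s' s : ℝ, 0 < s' → s' ≤ s → s ≤ 1 →
      (incY s' s).comp (hY s) = (hY s').comp (incY s' s))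
    -- the family of maps f, compatible with inclusions
    (f : ∀ s : ℝ, X s → Y s)
    (hf_comp : ∀ s' s : ℝ, 0 < s' → s' ≤ s → s ≤ 1 → ∀ x : X s,
      incY s' s (f s x) = f s' (incX s' s x))
    (x₀ : X 1) (α : ℝ) (hα : 0 < α)
    -- the h-j-linear maps Ω_j of norm ≤ 1, compatible with inclusions
    (Ω : ∀ (j : ℕ) (s : ℝ), ContinuousMultilinearMap ℝ (fun _ : Fin j => X s) (Y s))
    (hΩ_norm : ∀ j : ℕ, 1 ≤ j → ∀ s : ℝ, 0 < s → s ≤ 1 → ∀ v : Fin j → X s,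
      ‖Ω j s v‖ ≤ ∏ i, ‖v i‖)
    (hΩ_symm : ∀ j : ℕ, 1 ≤ j → ∀ s : ℝ, 0 < s → s ≤ 1 →
      ∀ (v : Fin j → X s) (σ : Equiv.Perm (Fin j)), Ω j s (v ∘ σ) = Ω j s v)
    (hΩ_h : ∀ j : ℕ, 1 ≤ j → ∀ s : ℝ, 0 < s → s ≤ 1 → ∀ (v : Fin j → X s) (i : Fin j),
      Ω j s (Function.update v i (hX s (v i))) = hY s (Ω j s v))
    (hΩ_inc : ∀ j : ℕ, 1 ≤ j → ∀ s' s : ℝ, 0 < s' → s' ≤ s → s ≤ 1 → ∀ v : Fin j → X s,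
      incY s' s (Ω j s v) = Ω j s' fun i => incX s' s (v i))
    -- the expansion f(x₀ + w) = f(x₀) + Σ_{j≥1} α^j Ω_j(w,…,w) for ‖w‖ < 1/α
    (hf_exp : ∀ s : ℝ, 0 < s → s ≤ 1 → ∀ w : X s, ‖w‖ < 1 / α →
      HasSum (fun j : ℕ => α ^ (j + 1) • Ω (j + 1) s fun _ => w)
        (f s (incX s 1 x₀ + w) - f s (incX s 1 x₀)))
    -- the Gevrey data g_n ∈ X̊₁
    (C₀ C : ℝ) (hC₀ : 0 < C₀) (hC : 0 < C)
    (g : ℕ → ∀ s : ℝ, X s)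
    (hg_inc : ∀ (n : ℕ) (s' s : ℝ), 0 < s' → s' ≤ s → s < 1 → incX s' s (g n s) = g n s')
    (hg_bound : ∀ n : ℕ, 1 ≤ n → ∀ s : ℝ, 0 < s → s < 1 →
      ‖g n s‖ ≤ C₀ * C ^ n * n.factorial / (1 - s) ^ n)
    (hC1 : 1 ≤ C)
    -- the data b, A and v_k ∈ X̊₁
    (b : ℕ) (A : ℝ) (hA : 0 < A)
    (v : ℕ → ∀ s : ℝ, X s)
    (hv_inc : ∀ (k : ℕ) (s' s : ℝ), 0 < s' → s' ≤ s → s < 1 → incX s' s (v k s) = v k s')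
    (hv_bound : ∀ k : ℕ, 1 ≤ k → ∀ s : ℝ, 0 < s → s < 1 →
      ‖v k s‖ ≤ A * C ^ k * k.factorial / (1 - s) ^ k) :
    ∃ w : ℕ → ∀ s : ℝ, Y s,
      (∀ (j : ℕ) (s' s : ℝ), 0 < s' → s' ≤ s → s < 1 → incY s' s (w j s) = w j s') ∧
      (∀ j : ℕ, 1 ≤ j → ∀ s : ℝ, 0 < s → s < 1 →
        ‖w j s‖ ≤ A / C₀ * beta1 (C₀ * α) * C ^ j * j.factorial / (1 - s) ^ j) ∧
      ∀ s : ℝ, 0 < s → s < 1 → τ * C / (1 - s) < 1 →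
        (∑' n : ℕ, (τ * C / (1 - s)) ^ (n + 1)) < 1 / (C₀ * α) →
        -- v_s = h^b Σ_{k≥1} h^k v_{k,s} and g_s = Σ_{k≥1} h^k g_{k,s} converge absolutely
        Summable (fun k : ℕ => ‖(hX s ^ (b + (k + 1))) (v (k + 1) s)‖) ∧
        Summable (fun k : ℕ => ‖(hX s ^ (k + 1)) (g (k + 1) s)‖) ∧
        ∃ (vs gs : X s),
          HasSum (fun k : ℕ => (hX s ^ (b + (k + 1))) (v (k + 1) s)) vs ∧
          HasSum (fun k : ℕ => (hX s ^ (k + 1)) (g (k + 1) s)) gs ∧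
          -- Σ_{j≥1} j·α^j·Ω̃_j(g_s,…,g_s,v_s) = Σ_{j≥1} h^j w_{j,s} in Y_s
          ∃ S : Y s,
            HasSum (fun j : ℕ =>
              (((j : ℝ) + 1) * α ^ (j + 1)) •
                Ω (j + 1) s (fun i => if (i : ℕ) = j then vs else gs)) S ∧
            HasSum (fun j : ℕ => (hY s ^ (j + 1)) (w (j + 1) s)) S := by
  classical
  set wfun : ℕ → ∀ s : ℝ, Y s := fun m s =>
    ∑ j ∈ Finset.range (m - b), (((j:ℝ) + 1) * α ^ (j + 1)) •
      ∑ k ∈ Kcomp (j+1) (m - b),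
        Ω (j+1) s (fun i => if (i:ℕ) = j then v (k i) s else g (k i) s) with hwfun
  have hβpos : (0:ℝ) ≤ beta1 (C₀ * α) := beta1_nonneg _ (by positivity)
  -- shared bound on a single Ω term
  have hΩbound : ∀ (s : ℝ), 0 < s → s < 1 → ∀ (j : ℕ) (k : Fin (j+1) → ℕ), (∀ i, 1 ≤ k i) →
      ‖Ω (j+1) s (fun i => if (i:ℕ) = j then v (k i) s else g (k i) s)‖
        ≤ C₀ ^ j * A * (C ^ (∑ i, k i) * (∏ i, ((k i).factorial : ℝ)) / (1-s) ^ (∑ i, k i)) := by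
    intro s hs0 hs1 j k hk
    have h1s : (0:ℝ) < 1 - s := by linarith
    refine le_trans (hΩ_norm (j+1) (by omega) s hs0 hs1.le _) ?_
    have hslot : ∀ i : Fin (j+1), ‖if (i:ℕ) = j then v (k i) s else g (k i) s‖
        ≤ (if (i:ℕ) = j then A else C₀) * (C ^ (k i) * ((k i).factorial : ℝ) / (1-s) ^ (k i)) := by
      intro i
      by_cases h : (i:ℕ) = j
      · rw [if_pos h, if_pos h]
        refine le_trans (hv_bound (k i) (hk i) s hs0 hs1) (le_of_eq ?_)
        ring
      · rw [if_neg h, if_neg h]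
        refine le_trans (hg_bound (k i) (hk i) s hs0 hs1) (le_of_eq ?_)
        ring
    refine le_trans (Finset.prod_le_prod (fun i _ => norm_nonneg _) (fun i _ => hslot i))
      (le_of_eq ?_)
    rw [Finset.prod_mul_distrib, prod_ite_last, Finset.prod_div_distrib,
      Finset.prod_mul_distrib, Finset.prod_pow_eq_pow_sum, Finset.prod_pow_eq_pow_sum]
    try ring
  refine ⟨wfun, ?_, ?_, ?_⟩
  · -- inclusions
    intro m s' s hs'0 hs's hs1
    simp only [hwfun]
    rw [map_sum]
    refine Finset.sum_congr rfl ?_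
    intro jj _
    rw [ContinuousLinearMap.map_smul]
    congr 1
    rw [map_sum]
    refine Finset.sum_congr rfl ?_
    intro k _
    rw [hΩ_inc (jj+1) (by omega) s' s hs'0 hs's (le_of_lt hs1)]
    congr 1
    funext i
    by_cases h : (i:ℕ) = jj
    · rw [if_pos h, if_pos h]
      exact hv_inc (k i) s' s hs'0 hs's hs1
    · rw [if_neg h, if_neg h]
      exact hg_inc (k i) s' s hs'0 hs's hs1
  · -- bounds
    intro m hm s hs0 hs1
    have h1s : (0:ℝ) < 1 - s := by linarith
    simp only [hwfun]
    rcases le_or_gt m b with hmb | hbm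
    · rw [show m - b = 0 from by omega]
      simp only [Finset.range_zero, Finset.sum_empty, norm_zero]
      positivity
    · have hn1 : 1 ≤ m - b := by omega
      have hnm : m - b ≤ m := by omega
      set n := m - b with hndef
      refine le_trans (norm_sum_le _ _) ?_
      have hterm : ∀ j ∈ Finset.range n,
          ‖(((j:ℝ) + 1) * α ^ (j + 1)) • ∑ k ∈ Kcomp (j+1) n,
              Ω (j+1) s (fun i => if (i:ℕ) = j then v (k i) s else g (k i) s)‖
            ≤ (A / C₀ * (C ^ n * (n.factorial : ℝ) / (1-s) ^ n)) *
                (((j:ℝ) + 1) * 4 ^ j * (C₀ * α) ^ (j + 1) / (j.factorial : ℝ)) := by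
        intro j _
        rw [norm_smul, Real.norm_eq_abs, abs_of_nonneg (by positivity)]
        have hin : ∀ k ∈ Kcomp (j+1) n,
            ‖Ω (j+1) s (fun i => if (i:ℕ) = j then v (k i) s else g (k i) s)‖
              ≤ (C₀ ^ j * A * (C ^ n / (1-s) ^ n)) * ∏ i, ((k i).factorial : ℝ) := by
          intro k hk
          rw [mem_Kcomp] at hk
          refine le_trans (hΩbound s hs0 hs1 j k hk.1) (le_of_eq ?_)
          rw [hk.2]
          ring
        have h2 : ‖∑ k ∈ Kcomp (j+1) n,
            Ω (j+1) s (fun i => if (i:ℕ) = j then v (k i) s else g (k i) s)‖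
              ≤ (C₀ ^ j * A * (C ^ n / (1-s) ^ n)) * (4 ^ j * (n.factorial : ℝ) / (j.factorial : ℝ)) := by
          refine le_trans (norm_sum_le _ _) ?_
          refine le_trans (Finset.sum_le_sum hin) ?_
          rw [← Finset.mul_sum]
          exact mul_le_mul_of_nonneg_left (Kcomp_sum_prod_fact_real j n) (by positivity)
        refine le_trans (mul_le_mul_of_nonneg_left h2 (by positivity)) (le_of_eq ?_)
        have hC₀ : (C₀:ℝ) ≠ 0 := ne_of_gt hC₀
        have hfj : ((j.factorial : ℝ)) ≠ 0 := by positivity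
        have h1s' : ((1:ℝ)-s) ≠ 0 := ne_of_gt h1s
        field_simp
        ring
      refine le_trans (Finset.sum_le_sum hterm) ?_
      rw [← Finset.mul_sum]
      have hsum := sum_le_beta1 (C₀ * α) (by positivity) (Finset.range n)
      refine le_trans (mul_le_mul_of_nonneg_left hsum (by positivity)) ?_
      have hmono : C ^ n * (n.factorial : ℝ) / (1-s) ^ n
          ≤ C ^ m * (m.factorial : ℝ) / (1-s) ^ m := by
        apply div_le_div₀ (by positivity)
        · apply mul_le_mul (pow_le_pow_right₀ hC1 hnm) ?_ (by positivity) (by positivity)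
          exact_mod_cast Nat.factorial_le hnm
        · positivity
        · exact pow_le_pow_of_le_one h1s.le (by linarith) hnm
      calc A / C₀ * (C ^ n * (n.factorial : ℝ) / (1-s) ^ n) * beta1 (C₀ * α)
          ≤ A / C₀ * (C ^ m * (m.factorial : ℝ) / (1-s) ^ m) * beta1 (C₀ * α) := by
            apply mul_le_mul_of_nonneg_right ?_ hβpos
            apply mul_le_mul_of_nonneg_left hmono (by positivity)
        _ = A / C₀ * beta1 (C₀ * α) * C ^ m * (m.factorial : ℝ) / (1-s) ^ m := by ring
  · -- main analytic statement
    intro s hs0 hs1 hrlt hrsum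
    have hs1' : s ≤ 1 := hs1.le
    have h1s : (0:ℝ) < 1 - s := by linarith
    set r : ℝ := τ * C / (1 - s) with hrdef
    have hr0 : 0 < r := by positivity
    have h1r : (0:ℝ) < 1 - r := by linarith
    have hgeom : Summable (fun k : ℕ => r ^ k) := summable_geometric_of_lt_one hr0.le hrlt
    have hgeom1 : Summable (fun k : ℕ => r ^ (k+1)) := by
      exact (summable_nat_add_iff 1).2 hgeom
    -- summability of the v-series
    have hvle : ∀ k : ℕ, ‖(hX s ^ (b + (k + 1))) (v (k + 1) s)‖ ≤ (A * τ ^ b) * r ^ (k+1) := by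
      intro k
      have hfle : (((k+1).factorial : ℝ)) ≤ (((b+(k+1)).factorial : ℝ)) := by
        exact_mod_cast Nat.factorial_le (by omega)
      have hfacpos : (0:ℝ) < (((b+(k+1)).factorial : ℝ)) := by positivity
      calc ‖(hX s ^ (b + (k + 1))) (v (k + 1) s)‖
          ≤ τ ^ (b+(k+1)) / (((b+(k+1)).factorial : ℝ)) * ‖v (k+1) s‖ :=
            hhX_norm s hs0 hs1' _ (by omega) _
        _ ≤ τ ^ (b+(k+1)) / (((b+(k+1)).factorial : ℝ)) *
              (A * C ^ (k+1) * (((k+1).factorial : ℝ)) / (1-s) ^ (k+1)) := by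
            apply mul_le_mul_of_nonneg_left (hv_bound (k+1) (by omega) s hs0 hs1) (by positivity)
        _ = ((A * τ ^ b) * r ^ (k+1)) * ((((k+1).factorial : ℝ)) / (((b+(k+1)).factorial : ℝ))) := by
            rw [hrdef, div_pow, mul_pow, pow_add]
            field_simp
        _ ≤ (A * τ ^ b) * r ^ (k+1) := by
            apply mul_le_of_le_one_right (by positivity)
            rw [div_le_one hfacpos]
            exact hfle
    have hsum_v : Summable (fun k : ℕ => ‖(hX s ^ (b + (k + 1))) (v (k + 1) s)‖) :=
      Summable.of_nonneg_of_le (fun k => norm_nonneg _) hvle (hgeom1.mul_left (A * τ ^ b))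
    -- summability of the g-series
    have hgle : ∀ k : ℕ, ‖(hX s ^ (k + 1)) (g (k + 1) s)‖ ≤ C₀ * r ^ (k+1) := by
      intro k
      calc ‖(hX s ^ (k + 1)) (g (k + 1) s)‖
          ≤ τ ^ (k+1) / (((k+1).factorial : ℝ)) * ‖g (k+1) s‖ :=
            hhX_norm s hs0 hs1' _ (by omega) _
        _ ≤ τ ^ (k+1) / (((k+1).factorial : ℝ)) *
              (C₀ * C ^ (k+1) * (((k+1).factorial : ℝ)) / (1-s) ^ (k+1)) := by
            apply mul_le_mul_of_nonneg_left (hg_bound (k+1) (by omega) s hs0 hs1) (by positivity)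
        _ = C₀ * r ^ (k+1) := by
            rw [hrdef, div_pow, mul_pow]
            field_simp
    have hsum_g : Summable (fun k : ℕ => ‖(hX s ^ (k + 1)) (g (k + 1) s)‖) :=
      Summable.of_nonneg_of_le (fun k => norm_nonneg _) hgle (hgeom1.mul_left C₀)
    obtain ⟨vstar, hvstar⟩ := Summable.of_norm hsum_v
    obtain ⟨gstar, hgstar⟩ := Summable.of_norm hsum_g
    refine ⟨hsum_v, hsum_g, vstar, gstar, hvstar, hgstar, ?_⟩
    -- shifted series
    set uv : ℕ → X s := fun l => if l = 0 then 0 else (hX s ^ (b + l)) (v l s) with huvdef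
    set ug : ℕ → X s := fun l => if l = 0 then 0 else (hX s ^ l) (g l s) with hugdef
    have huv1 : (fun k : ℕ => uv (k+1)) = fun k : ℕ => (hX s ^ (b + (k + 1))) (v (k + 1) s) := by
      funext k
      simp only [huvdef]
      rw [if_neg (Nat.succ_ne_zero k)]
    have hug1 : (fun k : ℕ => ug (k+1)) = fun k : ℕ => (hX s ^ (k + 1)) (g (k + 1) s) := by
      funext k
      simp only [hugdef]
      rw [if_neg (Nat.succ_ne_zero k)]
    have huvS : HasSum uv vstar := by
      have h1 : HasSum (fun k : ℕ => uv (k+1)) vstar := by rw [huv1]; exact hvstar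
      have h2 := (hasSum_nat_add_iff (f := uv) 1).1 h1
      simpa [huvdef] using h2
    have hugS : HasSum ug gstar := by
      have h1 : HasSum (fun k : ℕ => ug (k+1)) gstar := by rw [hug1]; exact hgstar
      have h2 := (hasSum_nat_add_iff (f := ug) 1).1 h1
      simpa [hugdef] using h2
    have huvn : Summable (fun l => ‖uv l‖) := by
      apply (summable_nat_add_iff 1).1
      refine hsum_v.congr ?_
      intro k
      exact (congrArg norm (congrFun huv1 k)).symm
    have hugn : Summable (fun l => ‖ug l‖) := by
      apply (summable_nat_add_iff 1).1
      refine hsum_g.congr ?_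
      intro k
      exact (congrArg norm (congrFun hug1 k)).symm
    -- the global family
    set F : ((j : ℕ) × (Fin (j+1) → ℕ)) → Y s := fun x =>
      if ∀ i, 1 ≤ x.2 i then
        (((x.1:ℝ) + 1) * α ^ (x.1 + 1)) •
          (hY s ^ (b + ∑ i, x.2 i))
            (Ω (x.1+1) s (fun i => if (i:ℕ) = x.1 then v (x.2 i) s else g (x.2 i) s))
      else 0 with hFdef
    set G : ((j : ℕ) × (Fin (j+1) → ℕ)) → ℝ := fun x =>
      if ∀ i, 1 ≤ x.2 i then
        (((x.1:ℝ) + 1) * α ^ (x.1 + 1)) * (τ ^ b * A * C₀ ^ x.1) * r ^ (∑ i, x.2 i) *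
          (∏ i, ((x.2 i).factorial : ℝ)) / (((∑ i, x.2 i).factorial : ℝ))
      else 0 with hGdef
    have hGnn : ∀ x, 0 ≤ G x := by
      intro x
      simp only [hGdef]
      split_ifs
      · positivity
      · exact le_refl 0
    -- norm bound ‖F x‖ ≤ G x
    have hG1 : ∀ x, ‖F x‖ ≤ G x := by
      rintro ⟨j, k⟩
      simp only [hFdef, hGdef]
      split_ifs with hp
      · have hn1 : 1 ≤ ∑ i, k i :=
          le_trans (hp 0) (Finset.single_le_sum (fun i _ => Nat.zero_le _) (Finset.mem_univ 0))
        have hfle : (((∑ i, k i).factorial : ℝ)) ≤ (((b + ∑ i, k i).factorial : ℝ)) := by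
          exact_mod_cast Nat.factorial_le (by omega)
        have hfacpos : (0:ℝ) < (((b + ∑ i, k i).factorial : ℝ)) := by positivity
        rw [norm_smul, Real.norm_eq_abs, abs_of_nonneg (by positivity)]
        have h2 := hhY_norm s hs0 hs1' (b + ∑ i, k i) (by omega)
          (Ω (j+1) s (fun i => if (i:ℕ) = j then v (k i) s else g (k i) s))
        have h3 := hΩbound s hs0 hs1 j k hp
        calc (((j:ℝ) + 1) * α ^ (j + 1)) *
              ‖(hY s ^ (b + ∑ i, k i))
                (Ω (j+1) s (fun i => if (i:ℕ) = j then v (k i) s else g (k i) s))‖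
            ≤ (((j:ℝ) + 1) * α ^ (j + 1)) *
                (τ ^ (b + ∑ i, k i) / (((b + ∑ i, k i).factorial : ℝ)) *
                  (C₀ ^ j * A * (C ^ (∑ i, k i) * (∏ i, ((k i).factorial : ℝ)) /
                    (1-s) ^ (∑ i, k i)))) := by
              apply mul_le_mul_of_nonneg_left ?_ (by positivity)
              refine le_trans h2 ?_
              apply mul_le_mul_of_nonneg_left h3 (by positivity)
          _ = ((((j:ℝ) + 1) * α ^ (j + 1)) * (τ ^ b * A * C₀ ^ j) * r ^ (∑ i, k i) *
                (∏ i, ((k i).factorial : ℝ)) / (((∑ i, k i).factorial : ℝ))) *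
                ((((∑ i, k i).factorial : ℝ)) / (((b + ∑ i, k i).factorial : ℝ))) := by
              rw [hrdef, div_pow, mul_pow, pow_add]
              field_simp
              ring
          _ ≤ (((j:ℝ) + 1) * α ^ (j + 1)) * (τ ^ b * A * C₀ ^ j) * r ^ (∑ i, k i) *
                (∏ i, ((k i).factorial : ℝ)) / (((∑ i, k i).factorial : ℝ)) := by
              apply mul_le_of_le_one_right (by positivity)
              rw [div_le_one hfacpos]
              exact hfle
      · simp
    -- partial sums of G over each fiber
    have hG2 : ∀ (j : ℕ) (u : Finset (Fin (j+1) → ℕ)),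
        ∑ k ∈ u, G ⟨j, k⟩
          ≤ (((j:ℝ) + 1) * α ^ (j + 1)) * (τ ^ b * A * C₀ ^ j) *
              (4 ^ j / (j.factorial : ℝ)) * (1 - r)⁻¹ := by
      intro j u
      have hmap : ∀ k ∈ u, (∑ i, k i) ∈ u.image (fun k => ∑ i, k i) :=
        fun k hk => Finset.mem_image_of_mem _ hk
      rw [← Finset.sum_fiberwise_of_maps_to hmap]
      have hinner : ∀ nn ∈ u.image (fun k => ∑ i, k i),
          ∑ k ∈ u.filter (fun k => ∑ i, k i = nn), G ⟨j, k⟩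
            ≤ ((((j:ℝ) + 1) * α ^ (j + 1)) * (τ ^ b * A * C₀ ^ j) *
                (4 ^ j / (j.factorial : ℝ))) * r ^ nn := by
        intro nn _
        have hstep1 : ∑ k ∈ u.filter (fun k => ∑ i, k i = nn), G ⟨j, k⟩
            = ∑ k ∈ (u.filter (fun k => ∑ i, k i = nn)).filter (fun k => ∀ i, 1 ≤ k i),
                G ⟨j, k⟩ := by
          refine (Finset.sum_subset (Finset.filter_subset _ _) ?_).symm
          intro k hk hnk
          simp only [hGdef]
          rw [if_neg]
          intro hpos
          exact hnk (Finset.mem_filter.2 ⟨hk, hpos⟩)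
        have hsubK : (u.filter (fun k => ∑ i, k i = nn)).filter (fun k => ∀ i, 1 ≤ k i)
            ⊆ Kcomp (j+1) nn := by
          intro k hk
          simp only [Finset.mem_filter] at hk
          exact mem_Kcomp.2 ⟨hk.2, hk.1.2⟩
        rw [hstep1]
        refine le_trans (Finset.sum_le_sum_of_subset_of_nonneg hsubK
          (fun k _ _ => hGnn ⟨j, k⟩)) ?_
        have heval : ∀ k ∈ Kcomp (j+1) nn, G ⟨j, k⟩
            = ((((j:ℝ) + 1) * α ^ (j + 1)) * (τ ^ b * A * C₀ ^ j) * r ^ nn /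
                ((nn.factorial : ℝ))) * ∏ i, ((k i).factorial : ℝ) := by
          intro k hk
          rw [mem_Kcomp] at hk
          simp only [hGdef]
          rw [if_pos hk.1, hk.2]
          ring
        rw [Finset.sum_congr rfl heval, ← Finset.mul_sum]
        refine le_trans (mul_le_mul_of_nonneg_left (Kcomp_sum_prod_fact_real j nn)
          (by positivity)) (le_of_eq ?_)
        have hfj : ((j.factorial : ℝ)) ≠ 0 := by positivity
        have hfn : ((nn.factorial : ℝ)) ≠ 0 := by positivity
        field_simp
        try ring
      refine le_trans (Finset.sum_le_sum hinner) ?_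
      rw [← Finset.mul_sum]
      have hpart : ∑ nn ∈ u.image (fun k => ∑ i, k i), r ^ nn ≤ (1-r)⁻¹ := by
        have h1 := Summable.sum_le_tsum (f := fun nn : ℕ => r ^ nn)
          (u.image (fun k => ∑ i, k i)) (fun k _ => by positivity) hgeom
        exact h1.trans (le_of_eq (tsum_geometric_of_lt_one hr0.le hrlt))
      refine le_trans (mul_le_mul_of_nonneg_left hpart (by positivity)) (le_of_eq (by ring))
    -- summability of G and F
    have hGfib : ∀ j, Summable (fun k : Fin (j+1) → ℕ => G ⟨j, k⟩) := by
      intro j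
      exact summable_of_sum_le (fun k => hGnn _) (hG2 j)
    have hGfibsum : ∀ j, ∑' k : Fin (j+1) → ℕ, G ⟨j, k⟩
        ≤ (((j:ℝ) + 1) * α ^ (j + 1)) * (τ ^ b * A * C₀ ^ j) *
            (4 ^ j / (j.factorial : ℝ)) * (1 - r)⁻¹ := by
      intro j
      exact Summable.tsum_le_of_sum_le (hGfib j) (hG2 j)
    have hDsum : Summable (fun j : ℕ =>
        (((j:ℝ) + 1) * α ^ (j + 1)) * (τ ^ b * A * C₀ ^ j) *
          (4 ^ j / (j.factorial : ℝ)) * (1 - r)⁻¹) := by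
      have h1 := (summable_succ_mul_pow_div_factorial (4 * (C₀ * α)) (by positivity)).mul_left
        (τ ^ b * A * (1 - r)⁻¹ * α)
      refine h1.congr ?_
      intro j
      rw [mul_pow, mul_pow]
      have hfj : ((j.factorial : ℝ)) ≠ 0 := by positivity
      field_simp
      ring
    have hGsum : Summable G := by
      refine (summable_sigma_of_nonneg hGnn).2 ⟨hGfib, ?_⟩
      exact Summable.of_nonneg_of_le (fun j => tsum_nonneg (fun k => hGnn _)) hGfibsum hDsum
    have hFnormsum : Summable (fun x => ‖F x‖) :=
      hGsum.of_nonneg_of_le (fun x => norm_nonneg _) hG1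
    obtain ⟨S, hS⟩ := Summable.of_norm hFnormsum
    refine ⟨S, ?_, ?_⟩
    · -- fibration by j : the derivative series
      refine hS.sigma ?_
      intro j
      have hu : ∀ i : Fin (j+1),
          Summable (fun l => ‖(if (i:ℕ) = j then uv else ug) l‖) := by
        intro i
        split_ifs
        exacts [huvn, hugn]
      have hU : ∀ i : Fin (j+1),
          HasSum (if (i:ℕ) = j then uv else ug) (if (i:ℕ) = j then vstar else gstar) := by
        intro i
        split_ifs
        exacts [huvS, hugS]
      have hml := multilinear_hasSum (j+1) (Ω (j+1) s)
        (fun i => if (i:ℕ) = j then uv else ug)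
        (fun i => if (i:ℕ) = j then vstar else gstar) hu hU
      have hml2 := hml.const_smul (((j:ℝ) + 1) * α ^ (j + 1))
      have hfe : (fun k : Fin (j+1) → ℕ => F ⟨j, k⟩)
          = fun k : Fin (j+1) → ℕ => (((j:ℝ) + 1) * α ^ (j + 1)) •
              Ω (j+1) s (fun i => (if (i:ℕ) = j then uv else ug) (k i)) := by
        funext k
        simp only [hFdef]
        by_cases hp : ∀ i, 1 ≤ k i
        · rw [if_pos hp]
          congr 1
          have hfe2 : (fun i : Fin (j+1) => (if (i:ℕ) = j then uv else ug) (k i))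
              = fun i : Fin (j+1) =>
                  (hX s ^ (if (i:ℕ) = j then b + k i else k i))
                    ((fun i : Fin (j+1) =>
                      if (i:ℕ) = j then v (k i) s else g (k i) s) i) := by
            funext i
            by_cases h : (i:ℕ) = j
            · rw [if_pos h]
              simp only [huvdef]
              rw [if_neg (by have := hp i; omega), if_pos h, if_pos h]
            · rw [if_neg h]
              simp only [hugdef]
              rw [if_neg (by have := hp i; omega), if_neg h, if_neg h]
          have hcsum : ∑ i : Fin (j+1), (if (i:ℕ) = j then b + k i else k i)
              = b + ∑ i, k i := by
            have hcc : ∀ i : Fin (j+1), (if (i:ℕ) = j then b + k i else k i)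
                = (if (i:ℕ) = j then b else 0) + k i := by
              intro i
              split_ifs <;> omega
            rw [Finset.sum_congr rfl (fun i _ => hcc i), Finset.sum_add_distrib,
              sum_ite_last_nat]
          rw [hfe2, omega_pow_out (Ω (j+1) s) (hX s) (hY s)
            (fun vv i => hΩ_h (j+1) (by omega) s hs0 hs1' vv i)
            (b + ∑ i, k i) _ hcsum]
        · rw [if_neg hp]
          push_neg at hp
          obtain ⟨i0, hi0⟩ := hp
          have hz : (fun i : Fin (j+1) => (if (i:ℕ) = j then uv else ug) (k i)) i0 = 0 := by
            have hk0 : k i0 = 0 := by omega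
            simp only
            by_cases h : (i0:ℕ) = j
            · rw [if_pos h, hk0, huvdef]
              simp
            · rw [if_neg h, hk0, hugdef]
              simp
          rw [(Ω (j+1) s).map_coord_zero i0 hz, smul_zero]
      rw [← hfe] at hml2
      exact hml2
    · -- fibration by total degree : the w series
      set q : ((j : ℕ) × (Fin (j+1) → ℕ)) → ℕ := fun x => b + (∑ i, x.2 i) - 1 with hqdef
      have hSe := (Equiv.hasSum_iff (Equiv.sigmaFiberEquiv q) (f := F) (a := S)).2 hS
      refine hSe.sigma ?_
      intro nn
      set T : Finset ((j : ℕ) × (Fin (j+1) → ℕ)) :=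
        (Finset.range (nn+1)).sigma (fun j => Kcomp (j+1) (nn+1-b)) with hTdef
      have hTmem : ∀ x ∈ T, (∀ i, 1 ≤ x.2 i) ∧ (∑ i, x.2 i) = nn+1-b ∧ b ≤ nn ∧ q x = nn := by
        intro x hx
        rw [hTdef, Finset.mem_sigma] at hx
        obtain ⟨hx1, hx2⟩ := hx
        rw [mem_Kcomp] at hx2
        have hpos : 1 ≤ ∑ i, x.2 i :=
          le_trans (hx2.1 0) (Finset.single_le_sum (fun i _ => Nat.zero_le _) (Finset.mem_univ 0))
        have hble : b ≤ nn := by omega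
        refine ⟨hx2.1, hx2.2, hble, ?_⟩
        rw [hqdef]
        simp only
        omega
      have hvanish : ∀ c : { x // q x = nn }, c ∉ T.subtype (fun x => q x = nn) → F c.val = 0 := by
        rintro ⟨x, hqx⟩ hc
        simp only [Finset.mem_subtype] at hc
        have hc' : x ∉ T := hc
        show F x = 0
        simp only [hFdef]
        rw [if_neg]
        intro hpos
        apply hc'
        have hge : x.1 + 1 ≤ ∑ i, x.2 i := by
          calc x.1 + 1 = ∑ _i : Fin (x.1+1), 1 := by simp
          _ ≤ ∑ i, x.2 i := Finset.sum_le_sum (fun i _ => hpos i)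
        have hq2 : b + (∑ i, x.2 i) - 1 = nn := hqx
        rw [hTdef, Finset.mem_sigma]
        constructor
        · rw [Finset.mem_range]
          omega
        · rw [mem_Kcomp]
          exact ⟨hpos, by omega⟩
      have hfibsum := hasSum_sum_of_ne_finset_zero (s := T.subtype (fun x => q x = nn))
        (f := fun c : { x // q x = nn } => F c.val) (L := SummationFilter.unconditional _) hvanish
      have hTq : ∀ x ∈ T, q x = nn := fun x hx => (hTmem x hx).2.2.2
      have hsum_eq : ∑ c ∈ T.subtype (fun x => q x = nn), F c.val
          = ∑ x ∈ T, F x := by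
        rw [Finset.sum_subtype_eq_sum_filter]
        congr 1
        exact Finset.filter_true_of_mem hTq
      have hTeval : ∑ x ∈ T, F x = (hY s ^ (nn+1)) (wfun (nn+1) s) := by
        rw [hTdef, Finset.sum_sigma]
        have hje : ∀ j ∈ Finset.range (nn+1),
            ∑ k ∈ Kcomp (j+1) (nn+1-b), F ⟨j, k⟩
              = (hY s ^ (nn+1)) ((((j:ℝ) + 1) * α ^ (j + 1)) •
                  ∑ k ∈ Kcomp (j+1) (nn+1-b),
                    Ω (j+1) s (fun i => if (i:ℕ) = j then v (k i) s else g (k i) s)) := by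
          intro j hj
          rw [ContinuousLinearMap.map_smul, map_sum, Finset.smul_sum]
          refine Finset.sum_congr rfl ?_
          intro k hk
          rw [mem_Kcomp] at hk
          have hpos : 1 ≤ ∑ i, k i :=
            le_trans (hk.1 0) (Finset.single_le_sum (fun i _ => Nat.zero_le _) (Finset.mem_univ 0))
          have hble : b ≤ nn := by omega
          simp only [hFdef]
          rw [if_pos hk.1, hk.2]
          rw [show b + (nn + 1 - b) = nn + 1 from by omega]
        rw [Finset.sum_congr rfl hje, ← map_sum]
        congr 1
        simp only [hwfun]
        rw [show nn + 1 - b = nn + 1 - b from rfl]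
        refine (Finset.sum_subset (Finset.range_subset_range.2 (by omega)) ?_).symm
        intro j hj hnj
        rw [Finset.mem_range] at hj hnj
        rw [Kcomp_eq_empty (by omega), Finset.sum_empty, smul_zero]
      rw [hsum_eq, hTeval] at hfibsum
      exact hfibsum
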